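/- The real vector space of traceless 4×4 real matrices X that commute with each of M(1,0), M(cos(2π/3), sin(2π/3)), and Ω(1,2π/3) has dimension 1; explicitly, it is spanned by the matrix whose only nonzero entry is a 1 in position (1,4). -/

import Mathlib

open Matrix Real

/-- The matrix `M(x,y)` from the `C₀`-type generalized cusp. -/
noncomputable def Mcusp (x y : ℝ) : Matrix (Fin 4) (Fin 4) ℝ :=
  !![1, x, y, (x ^ 2 + y ^ 2) / 2;
     0, 1, 0, x;
     0, 0, 1, y;
     0, 0, 0, 1]

/-- The similarity `Ω(1, 2π/3) = diag(1, R, 1)` with `R` the rotation of angle `2π/3`. -/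
noncomputable def Omega : Matrix (Fin 4) (Fin 4) ℝ :=
  !![1, 0, 0, 0;
     0, cos (2 * π / 3), -sin (2 * π / 3), 0;
     0, sin (2 * π / 3), cos (2 * π / 3), 0;
     0, 0, 0, 1]

/-- The space of traceless `4 × 4` real matrices commuting with every element of `S`. -/
def tracelessCommutant (S : Set (Matrix (Fin 4) (Fin 4) ℝ)) :
    Submodule ℝ (Matrix (Fin 4) (Fin 4) ℝ) where
  carrier := {X | X.trace = 0 ∧ ∀ A ∈ S, X * A = A * X}
  add_mem' := by
    rintro X Y ⟨hX1, hX2⟩ ⟨hY1, hY2⟩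
    refine ⟨by simp [trace_add, hX1, hY1], fun A hA => ?_⟩
    rw [add_mul, mul_add, hX2 A hA, hY2 A hA]
  zero_mem' := ⟨by simp, fun A hA => by simp⟩
  smul_mem' := by
    rintro c X ⟨hX1, hX2⟩
    refine ⟨by simp [hX1], fun A hA => ?_⟩
    rw [smul_mul_assoc, mul_smul_comm, hX2 A hA]

lemma key_aux (s : ℝ) (hs2 : s ^ 2 = 3 / 4) (X : Matrix (Fin 4) (Fin 4) ℝ)
    (htr : X.trace = 0)
    (hM : X * Mcusp 1 0 = Mcusp 1 0 * X)
    (hO : X * !![1,0,0,0; 0,-(1/2),-s,0; 0,s,-(1/2),0; 0,0,0,1]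
        = !![1,0,0,0; 0,-(1/2),-s,0; 0,s,-(1/2),0; 0,0,0,1] * X) :
    X = X 0 3 • Matrix.single (0 : Fin 4) (3 : Fin 4) (1 : ℝ) := by
  have hsne : s ≠ 0 := by intro h; rw [h] at hs2; norm_num at hs2
  have e := fun i j => congrFun (congrFun hO i) j
  have m := fun i j => congrFun (congrFun hM i) j
  have e01 := e 0 1; simp [Matrix.mul_apply, Fin.sum_univ_four, Matrix.vecHead, Matrix.vecTail] at e01
  have e02 := e 0 2; simp [Matrix.mul_apply, Fin.sum_univ_four, Matrix.vecHead, Matrix.vecTail] at e02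
  have e31 := e 3 1; simp [Matrix.mul_apply, Fin.sum_univ_four, Matrix.vecHead, Matrix.vecTail] at e31
  have e32 := e 3 2; simp [Matrix.mul_apply, Fin.sum_univ_four, Matrix.vecHead, Matrix.vecTail] at e32
  have e10 := e 1 0; simp [Matrix.mul_apply, Fin.sum_univ_four, Matrix.vecHead, Matrix.vecTail] at e10
  have e20 := e 2 0; simp [Matrix.mul_apply, Fin.sum_univ_four, Matrix.vecHead, Matrix.vecTail] at e20
  have e13 := e 1 3; simp [Matrix.mul_apply, Fin.sum_univ_four, Matrix.vecHead, Matrix.vecTail] at e13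
  have e23 := e 2 3; simp [Matrix.mul_apply, Fin.sum_univ_four, Matrix.vecHead, Matrix.vecTail] at e23
  have e11 := e 1 1; simp [Matrix.mul_apply, Fin.sum_univ_four, Matrix.vecHead, Matrix.vecTail] at e11
  have e12 := e 1 2; simp [Matrix.mul_apply, Fin.sum_univ_four, Matrix.vecHead, Matrix.vecTail] at e12
  have m31 := m 3 1; simp [Mcusp, Matrix.mul_apply, Fin.sum_univ_four, Matrix.vecHead, Matrix.vecTail] at m31
  have m23 := m 2 3; simp [Mcusp, Matrix.mul_apply, Fin.sum_univ_four, Matrix.vecHead, Matrix.vecTail] at m23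
  have m01 := m 0 1; simp [Mcusp, Matrix.mul_apply, Fin.sum_univ_four, Matrix.vecHead, Matrix.vecTail] at m01
  have m13 := m 1 3; simp [Mcusp, Matrix.mul_apply, Fin.sum_univ_four, Matrix.vecHead, Matrix.vecTail] at m13
  simp [Matrix.trace, Fin.sum_univ_four, Matrix.diag] at htr
  have h01 : X 0 1 = 0 := by linear_combination (-1/2 : ℝ)*e01 - (s/3)*e02 - (X 0 1/3)*hs2
  have h02 : X 0 2 = 0 := by linear_combination (-2/3 : ℝ)*e02 - (2*s/3)*h01
  have h31 : X 3 1 = 0 := by linear_combination (-1/2 : ℝ)*e31 - (s/3)*e32 - (X 3 1/3)*hs2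
  have h32 : X 3 2 = 0 := by linear_combination (-2/3 : ℝ)*e32 - (2*s/3)*h31
  have h10 : X 1 0 = 0 := by linear_combination (1/2 : ℝ)*e10 - (s/3)*e20 - (X 1 0/3)*hs2
  have h20 : X 2 0 = 0 := by linear_combination (2/3 : ℝ)*e20 + (2*s/3)*h10
  have h13 : X 1 3 = 0 := by linear_combination (1/2 : ℝ)*e13 - (s/3)*e23 - (X 1 3/3)*hs2
  have h23 : X 2 3 = 0 := by linear_combination (2/3 : ℝ)*e23 + (2*s/3)*h13
  have hq : X 2 1 = -(X 1 2) := mul_left_cancel₀ hsne (by linear_combination e11)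
  have hp : X 2 2 = X 1 1 := mul_left_cancel₀ hsne (by linear_combination e12)
  have h30 : X 3 0 = 0 := by linear_combination m31
  have h21 : X 2 1 = 0 := by linear_combination m23 - (1/2 : ℝ)*h20
  have h12 : X 1 2 = 0 := by linear_combination hq - h21
  have hd1 : X 0 0 = X 1 1 := by linear_combination m01 + (1/2 : ℝ)*h31
  have hd2 : X 1 1 = X 3 3 := by linear_combination m13 - (1/2 : ℝ)*h10
  have h11 : X 1 1 = 0 := by linarith
  have h00 : X 0 0 = 0 := by linarith
  have h22 : X 2 2 = 0 := by linarith
  have h33 : X 3 3 = 0 := by linarith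
  ext i j
  fin_cases i <;> fin_cases j <;>
    simp [Matrix.single] <;> assumption

lemma commE_M (x y : ℝ) :
    Matrix.single (0 : Fin 4) (3 : Fin 4) (1 : ℝ) * Mcusp x y
      = Mcusp x y * Matrix.single (0 : Fin 4) (3 : Fin 4) (1 : ℝ) := by
  ext i j
  fin_cases i <;> fin_cases j <;>
    simp [Mcusp, Matrix.single, Matrix.mul_apply, Fin.sum_univ_four,
      Matrix.vecHead, Matrix.vecTail]

lemma commE_O :
    Matrix.single (0 : Fin 4) (3 : Fin 4) (1 : ℝ) * Omega
      = Omega * Matrix.single (0 : Fin 4) (3 : Fin 4) (1 : ℝ) := by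
  ext i j
  fin_cases i <;> fin_cases j <;>
    simp [Omega, Matrix.single, Matrix.mul_apply, Fin.sum_univ_four,
      Matrix.vecHead, Matrix.vecTail]

lemma Ene : Matrix.single (0 : Fin 4) (3 : Fin 4) (1 : ℝ) ≠ 0 := by
  intro h
  have := congrFun (congrFun h 0) 3
  simp [Matrix.single] at this

/-- The traceless `4 × 4` real matrices commuting with `M(1,0)`,
`M(cos(2π/3), sin(2π/3))` and `Ω(1, 2π/3)` form a `1`-dimensional space, spanned by the
matrix whose only nonzero entry is a `1` in position `(1,4)` (in `1`-based indexing). -/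
theorem traceless_commutant_turnover :
    tracelessCommutant {Mcusp 1 0, Mcusp (cos (2 * π / 3)) (sin (2 * π / 3)), Omega}
        = Submodule.span ℝ {Matrix.single (0 : Fin 4) (3 : Fin 4) (1 : ℝ)} ∧
      Module.finrank ℝ
        (tracelessCommutant {Mcusp 1 0, Mcusp (cos (2 * π / 3)) (sin (2 * π / 3)), Omega}) = 1 := by
  have hcos : cos (2 * π / 3) = -(1/2) := by
    have h : (2 * π / 3 : ℝ) = π - π / 3 := by ring
    rw [h, Real.cos_pi_sub, Real.cos_pi_div_three]
  have hs2 : sin (2 * π / 3) ^ 2 = 3 / 4 := by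
    rw [Real.sin_sq, hcos]; norm_num
  have hOmega : Omega = !![1,0,0,0; 0,-(1/2),-(sin (2 * π / 3)),0;
      0,sin (2 * π / 3),-(1/2),0; 0,0,0,1] := by
    rw [Omega, hcos]
  have heq : tracelessCommutant {Mcusp 1 0, Mcusp (cos (2 * π / 3)) (sin (2 * π / 3)), Omega}
      = Submodule.span ℝ {Matrix.single (0 : Fin 4) (3 : Fin 4) (1 : ℝ)} := by
    apply le_antisymm
    · rintro X ⟨htr, hcomm⟩
      have hM := hcomm (Mcusp 1 0) (by simp)
      have hO := hcomm Omega (by simp)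
      rw [hOmega] at hO
      rw [Submodule.mem_span_singleton]
      exact ⟨X 0 3, (key_aux _ hs2 X htr hM hO).symm⟩
    · rw [Submodule.span_le]
      intro A hA
      simp only [Set.mem_singleton_iff] at hA
      subst hA
      refine ⟨?_, ?_⟩
      · rw [Matrix.trace, Matrix.diag_single_of_ne 0 3 1 (by decide)]
        simp
      · intro B hB
        simp only [Set.mem_insert_iff, Set.mem_singleton_iff] at hB
        rcases hB with rfl | rfl | rfl
        · exact commE_M 1 0
        · exact commE_M _ _
        · exact commE_O
  exact ⟨heq, by rw [heq, finrank_span_singleton Ene]⟩
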